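/- Let p and q be coprime positive integers and set t = πp/q. Then for every integer j there exists a real constant c (depending on p, q, j) such that for every real x with πj/q < x < π(j+1)/q, the symmetric partial sums 1/2 − (2/π)·Σ_{m=0}^{N} sin((2m+1)x − (2m+1)³ t)/(2m+1) converge to c as N → ∞. In other words, at the rational time t = πp/q the solution of the periodic Riemann problem for the Airy equation is constant on every subinterval (πj/q, π(j+1)/q). -/

import Mathlib

open Complex Real Filter Finset intervalIntegral

noncomputable section AiryAux


/-- `E a = exp(i a)` for real `a`. -/
def E (a : ℝ) : ℂ := Complex.exp (a * Complex.I)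

lemma E_mul (a b : ℝ) : E a * E b = E (a + b) := by
  rw [E, E, E, ← Complex.exp_add]; push_cast; ring_nf

lemma E_im (a : ℝ) : (E a).im = Real.sin a := Complex.exp_ofReal_mul_I_im a

lemma E_pow (a : ℝ) (n : ℕ) : E a ^ n = E (n * a) := by
  rw [E, E, ← Complex.exp_nat_mul]; push_cast; ring_nf

/-- partial sums of the odd sine series at `θ`. -/
def T (θ : ℝ) (N : ℕ) : ℝ := ∑ m ∈ Finset.range N, Real.sin ((2*m+1) * θ) / (2*m+1)

lemma kernel_cos (s : ℝ) (N : ℕ) :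
    (2 * Real.sin s) * ∑ m ∈ Finset.range N, Real.cos ((2*m+1) * s) = Real.sin (2*N*s) := by
  have h : ∀ m : ℕ, (2 * Real.sin s) * Real.cos ((2*m+1) * s)
      = Real.sin (2*(m+1)*s) - Real.sin (2*m*s) := by
    intro m
    have h1 : (2*(m:ℝ)+1) * s + s = 2*(m+1)*s := by ring
    have h2 : (2*(m:ℝ)+1) * s - s = 2*m*s := by ring
    rw [← h1, ← h2, Real.sin_add, Real.sin_sub]; ring
  rw [Finset.mul_sum]
  rw [Finset.sum_congr rfl (fun m _ => h m)]
  have := Finset.sum_range_sub (f := fun m : ℕ => Real.sin (2*m*s)) N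
  push_cast at this ⊢
  rw [this]
  simp

lemma kernel_sin (s : ℝ) (N : ℕ) :
    (2 * Real.sin s) * ∑ m ∈ Finset.range N, Real.sin ((2*m+1) * s) = 1 - Real.cos (2*N*s) := by
  have h : ∀ m : ℕ, (2 * Real.sin s) * Real.sin ((2*m+1) * s)
      = Real.cos (2*m*s) - Real.cos (2*(m+1)*s) := by
    intro m
    have h1 : (2*(m:ℝ)+1) * s + s = 2*(m+1)*s := by ring
    have h2 : (2*(m:ℝ)+1) * s - s = 2*m*s := by ring
    rw [← h1, ← h2, Real.cos_add, Real.cos_sub]; ring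
  rw [Finset.mul_sum]
  rw [Finset.sum_congr rfl (fun m _ => h m)]
  have := Finset.sum_range_sub (f := fun m : ℕ => -Real.cos (2*m*s)) N
  push_cast at this ⊢
  have h2 : ∑ m ∈ Finset.range N, (Real.cos (2*m*s) - Real.cos (2*(m+1)*s))
      = ∑ m ∈ Finset.range N, (-Real.cos (2*(m+1)*s) - -Real.cos (2*m*s)) := by
    apply Finset.sum_congr rfl; intro m _; ring
  rw [h2, this]
  simp only [Nat.cast_zero, mul_zero, zero_mul, Real.cos_zero]
  ring

/-- existence of the limit of `T θ` when `sin θ ≠ 0` (Dirichlet test). -/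
lemma T_exists_lim {θ : ℝ} (hθ : Real.sin θ ≠ 0) : ∃ L, Tendsto (T θ) atTop (nhds L) := by
  have hb : ∀ n : ℕ, ‖∑ m ∈ Finset.range n, Real.sin ((2*m+1) * θ)‖ ≤ 1 / |Real.sin θ| := by
    intro n
    have hk := kernel_sin θ n
    have h2 : (0:ℝ) < |Real.sin θ| := abs_pos.mpr hθ
    have hs : ∑ m ∈ Finset.range n, Real.sin ((2*m+1) * θ)
        = (1 - Real.cos (2*n*θ)) / (2 * Real.sin θ) := by
      field_simp
      rw [show (2:ℝ)*θ*n = 2*n*θ by ring]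
      linarith [hk]
    rw [Real.norm_eq_abs, hs, abs_div]
    have hc : |1 - Real.cos (2*n*θ)| ≤ 2 := by
      have := Real.neg_one_le_cos (2*n*θ)
      have := Real.cos_le_one (2*n*θ)
      rw [abs_le]; constructor <;> linarith
    have hd : |2 * Real.sin θ| = 2 * |Real.sin θ| := by rw [abs_mul]; norm_num
    rw [hd, div_le_div_iff₀ (by positivity) h2]
    calc |1 - Real.cos (2*n*θ)| * |Real.sin θ| ≤ 2 * |Real.sin θ| :=
          mul_le_mul_of_nonneg_right hc (abs_nonneg _)
      _ = 1 * (2 * |Real.sin θ|) := by ring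
  have hf : Antitone (fun m : ℕ => 1 / (2*(m:ℝ)+1)) := by
    intro a b hab
    apply one_div_le_one_div_of_le (by positivity)
    have : (a:ℝ) ≤ b := by exact_mod_cast hab
    linarith
  have hf0 : Tendsto (fun m : ℕ => 1 / (2*(m:ℝ)+1)) atTop (nhds 0) := by
    simp only [one_div]
    apply Tendsto.comp tendsto_inv_atTop_zero
    apply tendsto_atTop_add_const_right
    exact (tendsto_natCast_atTop_atTop).const_mul_atTop (by norm_num)
  have hcs := hf.cauchySeq_series_mul_of_tendsto_zero_of_bounded hf0 hb
  have : CauchySeq (T θ) := by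
    convert hcs using 2 with n
    apply Finset.sum_congr rfl
    intro m _
    rw [smul_eq_mul]; ring
  exact cauchySeq_tendsto_of_complete this


lemma T_diff_eq_integral (a b : ℝ) (N : ℕ) :
    T b N - T a N = ∫ s in a..b, ∑ m ∈ Finset.range N, Real.cos ((2*m+1) * s) := by
  have hint : ∀ m ∈ Finset.range N, IntervalIntegrable
      (fun s => Real.cos ((2*(m:ℝ)+1) * s)) MeasureTheory.volume a b := by
    intro m _
    exact (Real.continuous_cos.comp (continuous_const.mul continuous_id)).intervalIntegrable a b
  rw [intervalIntegral.integral_finset_sum hint]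
  have hterm : ∀ m : ℕ, (∫ s in a..b, Real.cos ((2*(m:ℝ)+1) * s))
      = Real.sin ((2*m+1) * b) / (2*m+1) - Real.sin ((2*m+1) * a) / (2*m+1) := by
    intro m
    have hne : (2*(m:ℝ)+1) ≠ 0 := by positivity
    have hd : ∀ s : ℝ, HasDerivAt (fun s : ℝ => Real.sin ((2*(m:ℝ)+1) * s) / (2*m+1))
        (Real.cos ((2*(m:ℝ)+1) * s)) s := by
      intro s
      have h1 : HasDerivAt (fun s : ℝ => (2*(m:ℝ)+1) * s) (2*(m:ℝ)+1) s := by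
        simpa using (hasDerivAt_id s).const_mul (2*(m:ℝ)+1)
      have h2 := (Real.hasDerivAt_sin ((2*(m:ℝ)+1) * s)).comp s h1
      have h3 := h2.div_const (2*(m:ℝ)+1)
      have h4 : Real.cos ((2*(m:ℝ)+1) * s) * (2*(m:ℝ)+1) / (2*(m:ℝ)+1) = Real.cos ((2*(m:ℝ)+1) * s) := by field_simp
      rw [← h4]; exact h3
    rw [intervalIntegral.integral_eq_sub_of_hasDerivAt (fun s _ => hd s)
      ((Real.continuous_cos.comp (continuous_const.mul continuous_id)).intervalIntegrable a b)]
  rw [T, T, ← Finset.sum_sub_distrib]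
  exact (Finset.sum_congr rfl (fun m _ => (hterm m).symm))

lemma T_diff_tendsto {a b : ℝ} (hs : ∀ s ∈ Set.uIcc a b, Real.sin s ≠ 0) :
    Tendsto (fun N => T b N - T a N) atTop (nhds 0) := by
  -- minimum of |sin| on uIcc
  obtain ⟨s₀, hs₀mem, hmin⟩ := isCompact_uIcc.exists_isMinOn Set.nonempty_uIcc
    (Real.continuous_sin.abs.continuousOn (s := Set.uIcc a b))
  set δ : ℝ := |Real.sin s₀| with hδdef
  have hδ : 0 < δ := abs_pos.mpr (hs s₀ hs₀mem)
  have hδle : ∀ s ∈ Set.uIcc a b, δ ≤ |Real.sin s| := fun s h => hmin h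
  set K : ℝ := (2*δ)⁻¹ * 2 + 2 / (2*δ)^2 * |b - a| with hKdef
  have hK : 0 ≤ K := by positivity
  -- the bound for N ≥ 1
  have hbound : ∀ N : ℕ, 1 ≤ N → |T b N - T a N| ≤ K * (2*(N:ℝ))⁻¹ := by
    intro N hN
    set c : ℝ := 2*(N:ℝ) with hcdef
    have hc : 0 < c := by positivity
    set u : ℝ → ℝ := fun s => (2 * Real.sin s)⁻¹ with hu
    set u' : ℝ → ℝ := fun s => -(2 * Real.cos s) / (2 * Real.sin s)^2 with hu'
    set v : ℝ → ℝ := fun s => -(Real.cos (c*s))/c with hv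
    set v' : ℝ → ℝ := fun s => Real.sin (c*s) with hv'
    have hud : ∀ s ∈ Set.uIcc a b, HasDerivAt u (u' s) s := by
      intro s hsm
      have h1 : HasDerivAt (fun s : ℝ => 2 * Real.sin s) (2 * Real.cos s) s :=
        (Real.hasDerivAt_sin s).const_mul 2
      exact h1.inv (by simpa using hs s hsm)
    have hvd : ∀ s : ℝ, HasDerivAt v (v' s) s := by
      intro s
      have h1 : HasDerivAt (fun s : ℝ => c * s) c s := by
        simpa using (hasDerivAt_id s).const_mul c
      have h2 : HasDerivAt (fun x : ℝ => Real.cos (c*x)) (-Real.sin (c*s)*c) s :=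
        (Real.hasDerivAt_cos (c*s)).comp s h1
      have h3 : HasDerivAt (fun x : ℝ => -Real.cos (c*x)/c) (-(-Real.sin (c*s)*c)/c) s :=
        (h2.neg).div_const c
      have h4 : -(-Real.sin (c*s)*c)/c = Real.sin (c*s) := by field_simp
      rw [hv, hv']
      simp only []
      rw [← h4]
      exact h3
    have hu'int : IntervalIntegrable u' MeasureTheory.volume a b := by
      apply ContinuousOn.intervalIntegrable
      apply ContinuousOn.div
      · exact (continuous_const.mul Real.continuous_cos).neg.continuousOn
      · exact ((continuous_const.mul Real.continuous_sin).pow 2).continuousOn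
      · intro s hsm
        have := hs s hsm
        positivity
    have hv'int : IntervalIntegrable v' MeasureTheory.volume a b :=
      (Real.continuous_sin.comp (continuous_const.mul continuous_id)).intervalIntegrable a b
    -- rewrite T b N - T a N as ∫ u * v'
    have step1 : T b N - T a N = ∫ s in a..b, u s * v' s := by
      rw [T_diff_eq_integral]
      apply intervalIntegral.integral_congr
      intro s hsm
      have hne : Real.sin s ≠ 0 := hs s hsm
      have hk := kernel_cos s N
      simp only [hu, hv', hcdef]
      field_simp
      rw [show (2:ℝ)*s*N = 2*N*s by ring]
      linarith [hk]
    have step2 : (∫ s in a..b, u s * v' s)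
        = u b * v b - u a * v a - ∫ s in a..b, u' s * v s := by
      exact intervalIntegral.integral_mul_deriv_eq_deriv_mul hud (fun s _ => hvd s) hu'int hv'int
    -- bounds
    have hub : ∀ s ∈ Set.uIcc a b, |u s| ≤ (2*δ)⁻¹ := by
      intro s hsm
      have h1 : |u s| = (2 * |Real.sin s|)⁻¹ := by
        simp only [hu, abs_inv, abs_mul]
        norm_num
      rw [h1]
      apply inv_anti₀ (by positivity)
      have := hδle s hsm; linarith
    have hvb : ∀ s : ℝ, |v s| ≤ c⁻¹ := by
      intro s
      simp only [hv, abs_div, abs_neg]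
      rw [abs_of_pos hc, div_le_iff₀ hc, inv_mul_cancel₀ (ne_of_gt hc)]
      exact Real.abs_cos_le_one _
    have hu'b : ∀ s ∈ Set.uIcc a b, |u' s| ≤ 2 / (2*δ)^2 := by
      intro s hsm
      simp only [hu', abs_div, abs_neg, abs_mul]
      have h2 : |Real.sin s| ^ 2 ≥ δ^2 := by
        apply pow_le_pow_left₀ (le_of_lt hδ) (hδle s hsm)
      have h3 : |(2 * Real.sin s)^2| = (2*|Real.sin s|)^2 := by
        rw [_root_.abs_pow, abs_mul]; norm_num
      rw [h3]
      apply div_le_div₀ (by norm_num)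
      · have := Real.abs_cos_le_one s
        have : |(2:ℝ)| = 2 := by norm_num
        simp only [this]
        nlinarith [Real.abs_cos_le_one s]
      · positivity
      · have : (2*δ)^2 = 4 * δ^2 := by ring
        nlinarith [hδle s hsm, abs_nonneg (Real.sin s)]
    have hIb : |∫ s in a..b, u' s * v s| ≤ (2 / (2*δ)^2 * c⁻¹) * |b - a| := by
      rw [← Real.norm_eq_abs]
      apply intervalIntegral.norm_integral_le_of_norm_le_const
      intro s hsm
      have hsm' : s ∈ Set.uIcc a b := Set.uIoc_subset_uIcc hsm
      rw [Real.norm_eq_abs, abs_mul]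
      exact mul_le_mul (hu'b s hsm') (hvb s) (abs_nonneg _) (by positivity)
    rw [step1, step2]
    have h1 : |u b * v b - u a * v a - ∫ s in a..b, u' s * v s|
        ≤ |u b| * |v b| + |u a| * |v a| + |∫ s in a..b, u' s * v s| := by
      calc _ ≤ |u b * v b - u a * v a| + |∫ s in a..b, u' s * v s| := abs_sub _ _
        _ ≤ |u b * v b| + |u a * v a| + |∫ s in a..b, u' s * v s| := by
            have := abs_sub (u b * v b) (u a * v a); linarith
        _ = |u b| * |v b| + |u a| * |v a| + |∫ s in a..b, u' s * v s| := by
            rw [abs_mul, abs_mul]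
    have hubb := hub b Set.right_mem_uIcc
    have huba := hub a Set.left_mem_uIcc
    have hvbb := hvb b
    have hvba := hvb a
    have e1 : |u b| * |v b| ≤ (2*δ)⁻¹ * c⁻¹ :=
      mul_le_mul hubb hvbb (abs_nonneg _) (by positivity)
    have e2 : |u a| * |v a| ≤ (2*δ)⁻¹ * c⁻¹ :=
      mul_le_mul huba hvba (abs_nonneg _) (by positivity)
    have : K * c⁻¹ = (2*δ)⁻¹ * c⁻¹ + (2*δ)⁻¹ * c⁻¹ + (2 / (2*δ)^2 * c⁻¹) * |b - a| := by
      rw [hKdef]; ring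
    rw [hcdef] at this ⊢
    linarith [h1, hIb, e1, e2]
  -- squeeze
  apply squeeze_zero_norm' (a := fun N : ℕ => K * (2*(N:ℝ))⁻¹)
  · filter_upwards [eventually_ge_atTop 1] with N hN
    exact hbound N hN
  · have h2 : Tendsto (fun N : ℕ => 2*(N:ℝ)) atTop atTop :=
      (tendsto_natCast_atTop_atTop).const_mul_atTop (by norm_num)
    simpa using (h2.inv_tendsto_atTop).const_mul K
lemma E_int_two_pi (n : ℤ) : E ((n:ℝ) * (2*π)) = 1 := by
  rw [E]
  have : (((n:ℝ) * (2*π) : ℝ) : ℂ) * Complex.I = (n:ℂ) * (2*(π:ℂ)*Complex.I) := by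
    push_cast; ring
  rw [this, Complex.exp_int_mul_two_pi_mul_I]

lemma E_add_int_two_pi (a : ℝ) (n : ℤ) : E (a + (n:ℝ)*(2*π)) = E a := by
  rw [← E_mul, E_int_two_pi, mul_one]

/-- the (unnormalized) DFT coefficients -/
def D (p q l : ℕ) : ℂ :=
  ∑ r ∈ Finset.range (2*q), E (-(((r:ℝ)^3 * (π*p/q)) + π*l*r/q))

lemma sin_sum_zero (p q l : ℕ) (hq : 0 < q) :
    ∑ r ∈ Finset.range (2*q), Real.sin ((r:ℝ)^3 * (π*p/q) + π*l*r/q) = 0 := by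
  have hq' : (q:ℝ) ≠ 0 := Nat.cast_ne_zero.mpr hq.ne'
  apply Finset.sum_involution (g := fun r _ => (2*q - r) % (2*q))
  · -- f r + f (g r) = 0
    intro r hr
    rw [Finset.mem_range] at hr
    by_cases h0 : r = 0
    · subst h0
      simp
    · have hrlt : r < 2*q := hr
      have hgr : (2*q - r) % (2*q) = 2*q - r := by
        apply Nat.mod_eq_of_lt; omega
      rw [hgr]
      have hcast : ((2*q - r : ℕ) : ℝ) = 2*(q:ℝ) - r := by
        push_cast [Nat.cast_sub (le_of_lt hrlt)]; ring
      set M : ℤ := (2*(q:ℤ) - r)^2 - (2*(q:ℤ) - r)*r + (r:ℤ)^2 with hM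
      have key : ((2*q - r : ℕ):ℝ)^3 * (π*p/q) + π*l*((2*q - r:ℕ):ℝ)/q
          = -((r:ℝ)^3 * (π*p/q) + π*l*r/q) + ((p*M + l : ℤ):ℝ) * (2*π) := by
        rw [hcast, hM]
        push_cast
        field_simp
        ring
      rw [key, Real.sin_add_int_mul_two_pi, Real.sin_neg]
      ring
  · -- g r ≠ r unless f r = 0
    intro r hr hf
    rw [Finset.mem_range] at hr
    intro hcon
    apply hf
    by_cases h0 : r = 0
    · subst h0; simp
    · have hgr : (2*q - r) % (2*q) = 2*q - r := by
        apply Nat.mod_eq_of_lt; omega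
      rw [hgr] at hcon
      have hrq : r = q := by omega
      rw [hrq]
      have harg : (q:ℝ)^3 * (π*p/q) + π*l*q/q = ((p*q^2 + l : ℕ):ℝ) * π := by
        push_cast; field_simp
      rw [harg, Real.sin_nat_mul_pi]
  · -- g maps into range
    intro r hr
    rw [Finset.mem_range] at hr ⊢
    exact Nat.mod_lt _ (by omega)
  · -- involution
    intro r hr
    rw [Finset.mem_range] at hr
    by_cases h0 : r = 0
    · subst h0; simp
    · have hgr : (2*q - r) % (2*q) = 2*q - r := by
        apply Nat.mod_eq_of_lt; omega
      rw [hgr]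
      have hgg : (2*q - (2*q - r)) % (2*q) = r := by
        rw [Nat.sub_sub_self (le_of_lt hr)]
        exact Nat.mod_eq_of_lt hr
      exact hgg

lemma D_im_zero (p q l : ℕ) (hq : 0 < q) : (D p q l).im = 0 := by
  rw [D, Complex.im_sum]
  have : ∀ r ∈ Finset.range (2*q),
      (E (-(((r:ℝ)^3 * (π*p/q)) + π*l*r/q))).im
      = -Real.sin ((r:ℝ)^3 * (π*p/q) + π*l*r/q) := by
    intro r _
    rw [E_im, Real.sin_neg]
  rw [Finset.sum_congr rfl this, Finset.sum_neg_distrib, sin_sum_zero p q l hq, neg_zero]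

lemma E_geom (q : ℕ) (hq : 0 < q) (a : ℤ) :
    ∑ l ∈ Finset.range (2*q), (E (π*(a:ℝ)/q))^l
      = if (2*(q:ℤ)) ∣ a then ((2*q:ℕ):ℂ) else 0 := by
  have hq' : (q:ℝ) ≠ 0 := Nat.cast_ne_zero.mpr hq.ne'
  have hEpow : (E (π*(a:ℝ)/q))^(2*q) = 1 := by
    rw [E_pow]
    have : ((2*q:ℕ):ℝ) * (π*(a:ℝ)/q) = (a:ℝ) * (2*π) := by
      push_cast; field_simp
    rw [this, E_int_two_pi]
  by_cases h : (2*(q:ℤ)) ∣ a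
  · obtain ⟨e, he⟩ := h
    have h1 : E (π*(a:ℝ)/q) = 1 := by
      have harg : π*(a:ℝ)/q = (e:ℝ) * (2*π) := by
        rw [he]; push_cast; field_simp
      rw [harg, E_int_two_pi]
    rw [h1, if_pos ⟨e, he⟩]
    simp
  · have hz1 : E (π*(a:ℝ)/q) ≠ 1 := by
      intro hcon
      apply h
      rw [E, Complex.exp_eq_one_iff] at hcon
      obtain ⟨n, hn⟩ := hcon
      have hn2 : ((π*(a:ℝ)/q : ℝ) : ℂ) * Complex.I = (((n:ℝ) * (2*π) : ℝ) : ℂ) * Complex.I := by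
        rw [hn]; push_cast; ring
      have hn3 : π*(a:ℝ)/q = (n:ℝ)*(2*π) :=
        Complex.ofReal_inj.mp (mul_right_cancel₀ Complex.I_ne_zero hn2)
      have h5 : π * (a:ℝ) = π * (2*(q:ℝ)*(n:ℝ)) := by
        field_simp at hn3
        linear_combination π * hn3
      have h6 := mul_left_cancel₀ Real.pi_ne_zero h5
      exact ⟨n, by exact_mod_cast h6⟩
    rw [geom_sum_eq hz1, hEpow, if_neg h]
    simp

lemma horth (p q : ℕ) (hq : 0 < q) (k : ℕ) :
    ∑ l ∈ Finset.range (2*q), D p q l * E (π*l*k/q)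
      = ((2*q:ℕ):ℂ) * E (-((k:ℝ)^3 * (π*p/q))) := by
  have hq' : (q:ℝ) ≠ 0 := Nat.cast_ne_zero.mpr hq.ne'
  -- expand D and swap sums
  have step1 : ∑ l ∈ Finset.range (2*q), D p q l * E (π*l*k/q)
      = ∑ r ∈ Finset.range (2*q), E (-((r:ℝ)^3 * (π*p/q)))
          * ∑ l ∈ Finset.range (2*q), (E (π*((k - r : ℤ):ℝ)/q))^l := by
    simp only [D, Finset.sum_mul]
    rw [Finset.sum_comm]
    apply Finset.sum_congr rfl
    intro r _
    rw [Finset.mul_sum]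
    apply Finset.sum_congr rfl
    intro l _
    rw [E_pow, E_mul, E_mul]
    congr 1
    push_cast
    field_simp
    ring
  rw [step1]
  have step2 : ∀ r ∈ Finset.range (2*q),
      E (-((r:ℝ)^3 * (π*p/q))) * ∑ l ∈ Finset.range (2*q), (E (π*((k - r : ℤ):ℝ)/q))^l
      = if r = k % (2*q) then E (-((r:ℝ)^3 * (π*p/q))) * ((2*q:ℕ):ℂ) else 0 := by
    intro r hr
    rw [Finset.mem_range] at hr
    rw [E_geom q hq ((k:ℤ) - (r:ℤ))]
    by_cases hd : (2*(q:ℤ)) ∣ ((k:ℤ) - (r:ℤ))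
    · have hmod : (r:ℤ) % (2*(q:ℤ)) = (k:ℤ) % (2*(q:ℤ)) := Int.modEq_iff_dvd.mpr hd
      have h2 : (r:ℤ) % (2*(q:ℤ)) = r :=
        Int.emod_eq_of_lt (by positivity) (by exact_mod_cast hr)
      have h3 : ((k % (2*q) : ℕ):ℤ) = (k:ℤ) % (2*(q:ℤ)) := by push_cast; ring
      have hreq : r = k % (2*q) := by
        have h4 : (r:ℤ) = ((k % (2*q) : ℕ):ℤ) := by rw [← h2, hmod, h3]
        exact_mod_cast h4
      rw [if_pos hd, if_pos hreq]
    · have hrne : r ≠ k % (2*q) := by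
        intro hcon
        apply hd
        refine ⟨((k / (2*q) : ℕ):ℤ), ?_⟩
        have h5 : ((2*q*(k/(2*q)) + k % (2*q) : ℕ):ℤ) = (k:ℤ) := by
          exact_mod_cast congrArg (Nat.cast : ℕ → ℤ) (Nat.div_add_mod k (2*q))
        push_cast at h5
        rw [hcon]
        push_cast
        linarith
      rw [if_neg hd, if_neg hrne, mul_zero]
  rw [Finset.sum_congr rfl step2, Finset.sum_ite_eq' (Finset.range (2*q)) (k % (2*q))
    (fun r => E (-((r:ℝ)^3 * (π*p/q))) * ((2*q:ℕ):ℂ))]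
  have hmem : k % (2*q) ∈ Finset.range (2*q) := Finset.mem_range.mpr (Nat.mod_lt _ (by omega))
  rw [if_pos hmem]
  -- now show E(-(k%2q)³t) = E(-k³t)
  set r₀ := k % (2*q) with hr₀
  set s := k / (2*q) with hs
  have hk : 2*q*s + r₀ = k := Nat.div_add_mod k (2*q)
  have hk' : (k:ℝ) = 2*q*s + r₀ := by exact_mod_cast (congrArg (Nat.cast : ℕ → ℝ) hk).symm
  have hc : (k:ℝ)^3 = (r₀:ℝ)^3 + 2*(q:ℝ)*(s:ℝ)*((k:ℝ)^2 + (k:ℝ)*(r₀:ℝ) + (r₀:ℝ)^2) := by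
    linear_combination ((k:ℝ)^2 + (k:ℝ)*(r₀:ℝ) + (r₀:ℝ)^2) * hk'
  have hE : E (-((r₀:ℝ)^3 * (π*p/q))) = E (-((k:ℝ)^3 * (π*p/q))) := by
    have harg : -((r₀:ℝ)^3 * (π*p/q)) = -((k:ℝ)^3 * (π*p/q))
        + (((p*s*(k^2 + k*r₀ + r₀^2) : ℕ):ℤ):ℝ) * (2*π) := by
      rw [hc]
      push_cast
      field_simp
      ring
    rw [harg, E_add_int_two_pi]
  rw [hE]
  ring

lemma decomp (p q : ℕ) (hq : 0 < q) (k : ℕ) (x : ℝ) :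
    Real.sin ((k:ℝ)*x - (k:ℝ)^3*(π*p/q))
      = ∑ l ∈ Finset.range (2*q), ((D p q l).re / (2*q)) * Real.sin ((k:ℝ)*(x + π*l/q)) := by
  have hq' : (q:ℝ) ≠ 0 := Nat.cast_ne_zero.mpr hq.ne'
  have h := horth p q hq k
  have h2 := congrArg (fun z => (E ((k:ℝ)*x) * z).im) h
  have hL : (E ((k:ℝ)*x) * ∑ l ∈ Finset.range (2*q), D p q l * E (π*l*k/q)).im
      = ∑ l ∈ Finset.range (2*q), (D p q l).re * Real.sin ((k:ℝ)*(x + π*l/q)) := by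
    rw [Finset.mul_sum, Complex.im_sum]
    apply Finset.sum_congr rfl
    intro l _
    have e1 : E ((k:ℝ)*x) * (D p q l * E (π*l*k/q)) = D p q l * E ((k:ℝ)*(x + π*l/q)) := by
      rw [mul_comm (E ((k:ℝ)*x)), mul_assoc, E_mul]
      congr 2
      field_simp; ring
    rw [e1, Complex.mul_im, D_im_zero p q l hq, E_im, zero_mul, add_zero]
  have hR : (E ((k:ℝ)*x) * (((2*q:ℕ):ℂ) * E (-((k:ℝ)^3 * (π*p/q))))).im
      = ((2*q:ℕ):ℝ) * Real.sin ((k:ℝ)*x - (k:ℝ)^3*(π*p/q)) := by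
    have e2 : E ((k:ℝ)*x) * (((2*q:ℕ):ℂ) * E (-((k:ℝ)^3 * (π*p/q))))
        = ((2*q:ℕ):ℂ) * E ((k:ℝ)*x + -((k:ℝ)^3 * (π*p/q))) := by
      rw [← E_mul]; ring
    rw [e2, Complex.mul_im, Complex.natCast_im, Complex.natCast_re, E_im, zero_mul, add_zero]
    rw [← sub_eq_add_neg]
  rw [hL, hR] at h2
  have hQ : ((2*q:ℕ):ℝ) ≠ 0 := by positivity
  have h4 : ∑ l ∈ Finset.range (2*q), ((D p q l).re / (2*q)) * Real.sin ((k:ℝ)*(x + π*l/q))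
      = (((2*q:ℕ):ℝ))⁻¹ * ∑ l ∈ Finset.range (2*q), (D p q l).re * Real.sin ((k:ℝ)*(x + π*l/q)) := by
    rw [Finset.mul_sum]
    apply Finset.sum_congr rfl
    intro l _
    push_cast
    ring
  rw [h4, h2, inv_mul_cancel_left₀ hQ]

lemma sin_ne_zero_of_interval (q : ℕ) (hq : 0 < q) (a : ℤ) {θ : ℝ}
    (h1 : π*(a:ℝ)/q < θ) (h2 : θ < π*((a:ℝ)+1)/q) : Real.sin θ ≠ 0 := by
  intro h
  rw [Real.sin_eq_zero_iff] at h
  obtain ⟨n, hn⟩ := h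
  rw [← hn] at h1 h2
  have hq0 : (0:ℝ) < q := by exact_mod_cast hq
  have hπ := Real.pi_pos
  have s1 : π*(a:ℝ) < (n:ℝ)*π*q := (div_lt_iff₀ hq0).mp h1
  have s1' : π*(a:ℝ) < π*((n:ℝ)*q) := by nlinarith [s1]
  have hA : (a:ℝ) < (n:ℝ)*q := lt_of_mul_lt_mul_left s1' (le_of_lt hπ)
  have s2 : (n:ℝ)*π*q < π*((a:ℝ)+1) := (lt_div_iff₀ hq0).mp h2
  have s2' : π*((n:ℝ)*q) < π*((a:ℝ)+1) := by nlinarith [s2]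
  have hB : (n:ℝ)*q < (a:ℝ)+1 := lt_of_mul_lt_mul_left s2' (le_of_lt hπ)
  have hA' : a < n*q := by exact_mod_cast hA
  have hB' : n*q < a+1 := by exact_mod_cast hB
  omega

end AiryAux
/-- At rational time t = πp/q (p, q coprime positive integers), the
(weak) solution of the periodic Riemann problem for the Airy equation, given by the
conditionally convergent Fourier series
u(t,x) = 1/2 − (2/π)·Σ_{m=0}^{∞} sin((2m+1)x − (2m+1)³ t)/(2m+1),
is constant on every subinterval (πj/q, π(j+1)/q): the symmetric partial sums
converge to a constant c = c(p,q,j) independent of x in that interval. -/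
theorem airy_rational_time_piecewise_constant
    (p q : ℕ) (hp : 0 < p) (hq : 0 < q) (hpq : Nat.Coprime p q) (j : ℤ) :
    ∃ c : ℝ, ∀ x : ℝ,
      Real.pi * (j : ℝ) / (q : ℝ) < x → x < Real.pi * ((j : ℝ) + 1) / (q : ℝ) →
      Filter.Tendsto
        (fun N : ℕ =>
          1 / 2 - (2 / Real.pi) *
            ∑ m ∈ Finset.range (N + 1),
              Real.sin ((2 * (m : ℝ) + 1) * x
                  - (2 * (m : ℝ) + 1) ^ 3 * (Real.pi * (p : ℝ) / (q : ℝ)))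
                / (2 * (m : ℝ) + 1))
        Filter.atTop (nhds c) := by
  have hq0 : (q:ℝ) ≠ 0 := Nat.cast_ne_zero.mpr hq.ne'
  have hqpos : (0:ℝ) < q := by exact_mod_cast hq
  have hπ := Real.pi_pos
  set t : ℝ := Real.pi * (p:ℝ) / (q:ℝ) with ht
  set cf : ℕ → ℝ := fun l => (D p q l).re / (2*q) with hcf
  -- base point
  set x₀ : ℝ := Real.pi * (j:ℝ) / q + Real.pi/(2*q) with hx₀
  have hx₀1 : Real.pi * (j:ℝ) / q < x₀ := by
    rw [hx₀]; have : 0 < Real.pi/(2*q) := by positivity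
    linarith
  have hx₀2 : x₀ < Real.pi * ((j:ℝ)+1) / q := by
    rw [hx₀]
    have h1 : Real.pi * ((j:ℝ)+1)/q = Real.pi * (j:ℝ)/q + Real.pi/q := by field_simp
    have h2 : Real.pi/(2*q) < Real.pi/q := by
      apply div_lt_div_of_pos_left hπ hqpos
      linarith
    linarith
  -- interval facts for shifted points
  have hshift : ∀ (l : ℕ) (y : ℝ), Real.pi * (j:ℝ)/q < y → y < Real.pi * ((j:ℝ)+1)/q →
      Real.pi * (((j + (l:ℤ)):ℤ):ℝ)/q < y + Real.pi*l/q ∧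
      y + Real.pi*l/q < Real.pi * ((((j + (l:ℤ)):ℤ):ℝ)+1)/q := by
    intro l y hy1 hy2
    have e1 : Real.pi * (((j + (l:ℤ)):ℤ):ℝ)/q = Real.pi * (j:ℝ)/q + Real.pi*l/q := by
      push_cast; field_simp
    have e2 : Real.pi * ((((j + (l:ℤ)):ℤ):ℝ)+1)/q = Real.pi * ((j:ℝ)+1)/q + Real.pi*l/q := by
      push_cast; field_simp; ring
    constructor
    · rw [e1]; linarith
    · rw [e2]; linarith
  -- existence of limits at the base point
  have hex : ∀ l : ℕ, ∃ L, Tendsto (T (x₀ + Real.pi*l/q)) atTop (nhds L) := by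
    intro l
    obtain ⟨ha, hb⟩ := hshift l x₀ hx₀1 hx₀2
    exact T_exists_lim (sin_ne_zero_of_interval q hq (j + (l:ℤ)) ha hb)
  choose L hL using hex
  refine ⟨1/2 - (2/Real.pi) * ∑ l ∈ Finset.range (2*q), cf l * L l, ?_⟩
  intro x hx1 hx2
  -- each shifted partial sum tends to L l
  have hterm : ∀ l : ℕ, Tendsto (T (x + Real.pi*l/q)) atTop (nhds (L l)) := by
    intro l
    obtain ⟨ha, hb⟩ := hshift l x hx1 hx2
    obtain ⟨ha0, hb0⟩ := hshift l x₀ hx₀1 hx₀2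
    have hsin : ∀ s ∈ Set.uIcc (x₀ + Real.pi*l/q) (x + Real.pi*l/q), Real.sin s ≠ 0 := by
      intro s hsm
      rw [Set.mem_uIcc] at hsm
      apply sin_ne_zero_of_interval q hq (j + (l:ℤ))
      · rcases hsm with ⟨h1, _⟩ | ⟨h1, _⟩ <;> linarith
      · rcases hsm with ⟨_, h2⟩ | ⟨_, h2⟩ <;> linarith
    have hdiff := T_diff_tendsto hsin
    have := hdiff.add (hL l)
    simpa using this
  have hsum : Tendsto (fun N => ∑ l ∈ Finset.range (2*q), cf l * T (x + Real.pi*l/q) N)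
      atTop (nhds (∑ l ∈ Finset.range (2*q), cf l * L l)) :=
    tendsto_finset_sum _ (fun l _ => (hterm l).const_mul (cf l))
  have htotal : Tendsto
      (fun N => 1/2 - (2/Real.pi) * ∑ l ∈ Finset.range (2*q), cf l * T (x + Real.pi*l/q) N)
      atTop (nhds (1/2 - (2/Real.pi) * ∑ l ∈ Finset.range (2*q), cf l * L l)) :=
    (hsum.const_mul (2/Real.pi)).const_sub (1/2)
  have hshifted := htotal.comp (tendsto_add_atTop_nat 1)
  apply hshifted.congr
  intro N
  simp only [Function.comp]
  congr 1
  -- sum identity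
  have key : ∑ m ∈ Finset.range (N + 1),
        Real.sin ((2 * (m : ℝ) + 1) * x - (2 * (m : ℝ) + 1) ^ 3 * t) / (2 * (m : ℝ) + 1)
      = ∑ l ∈ Finset.range (2*q), cf l * T (x + Real.pi*l/q) (N+1) := by
    have hm : ∀ m : ℕ,
        Real.sin ((2 * (m : ℝ) + 1) * x - (2 * (m : ℝ) + 1) ^ 3 * t) / (2 * (m : ℝ) + 1)
        = ∑ l ∈ Finset.range (2*q),
            cf l * (Real.sin ((2*(m:ℝ)+1) * (x + Real.pi*l/q)) / (2*(m:ℝ)+1)) := by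
      intro m
      have hd := decomp p q hq (2*m+1) x
      push_cast at hd
      rw [ht, hd, Finset.sum_div]
      apply Finset.sum_congr rfl
      intro l _
      rw [hcf]
      push_cast
      ring
    rw [Finset.sum_congr rfl (fun m _ => hm m), Finset.sum_comm]
    apply Finset.sum_congr rfl
    intro l _
    rw [T, Finset.mul_sum]
  rw [key]
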